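/- Let P be a finite nonempty set of points in the Euclidean plane and w : P → ℝ a weight function. Suppose c ∈ P satisfies w(c) ≤ w(a) for all a ∈ P, and let r be a point of the plane with ‖c − r‖ ≤ 1. Then for every point p attaining the minimum of w(a) + ‖a − r‖ over {a ∈ P : ‖a − r‖ ≤ 1}, and every b ∈ P with ‖b − r‖ > 1, one has w(p) + ‖p − r‖ < w(b) + ‖b − r‖. Consequently, the minimum of w(a) + ‖a − r‖ over {a ∈ P : ‖a − r‖ ≤ 1} equals its minimum over all of P, and every minimizer over P lies in the closed unit disk centered at r. -/

import Mathlib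

noncomputable section

abbrev Pt := EuclideanSpace ℝ (Fin 2)

/-- Lemma "firstUpdate": additively-weighted nearest-neighbor queries from a point
within distance 1 of a minimum-weight point need not be restricted to the unit disk. -/
theorem stmt_0 (P : Finset Pt) (w : Pt → ℝ) (c : Pt) (hc : c ∈ P)
    (hcmin : ∀ a ∈ P, w c ≤ w a) (r : Pt) (hcr : dist c r ≤ 1) :
    (∀ p ∈ P.filter (fun a => dist a r ≤ 1),
      (∀ a ∈ P.filter (fun a => dist a r ≤ 1), w p + dist p r ≤ w a + dist a r) →
      ∀ b ∈ P, 1 < dist b r → w p + dist p r < w b + dist b r)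
    ∧ (P.filter (fun a => dist a r ≤ 1)).inf'
        ⟨c, Finset.mem_filter.2 ⟨hc, hcr⟩⟩ (fun a => w a + dist a r)
      = P.inf' ⟨c, hc⟩ (fun a => w a + dist a r)
    ∧ ∀ p ∈ P, (∀ a ∈ P, w p + dist p r ≤ w a + dist a r) → dist p r ≤ 1 := by
  have hcfil : c ∈ P.filter (fun a => dist a r ≤ 1) := Finset.mem_filter.2 ⟨hc, hcr⟩
  refine ⟨?_, ?_, ?_⟩
  · intro p hp hmin b hb hbr
    have h1 : w p + dist p r ≤ w c + dist c r := hmin c hcfil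
    have h2 : w c + dist c r ≤ w c + 1 := by linarith
    have h3 : w c + 1 < w b + dist b r := by
      have := hcmin b hb; linarith
    linarith
  · apply le_antisymm
    · apply Finset.le_inf'
      intro a ha
      by_cases h : dist a r ≤ 1
      · exact Finset.inf'_le _ (Finset.mem_filter.2 ⟨ha, h⟩)
      · have h1 : (P.filter (fun a => dist a r ≤ 1)).inf' ⟨c, hcfil⟩
            (fun a => w a + dist a r) ≤ w c + dist c r := Finset.inf'_le _ hcfil
        have := hcmin a ha
        push_neg at h
        linarith
    · apply Finset.le_inf'
      intro a ha
      exact Finset.inf'_le _ (Finset.mem_filter.1 ha).1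
  · intro p hp hmin
    have h1 : w p + dist p r ≤ w c + dist c r := hmin c hc
    have h2 : w c ≤ w p := hcmin p hp
    linarith
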